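/- Let ν ∈ ℝ, let ω₋₁,₁(0), v_{c,1}(0), v_{c,2}(0) ∈ ℂ with v_{c,1}(0) ≠ v_{c,2}(0), and set d = v_{c,1}(0) − v_{c,2}(0). Suppose T > 0 is such that for all t ∈ [0, T) the complex number 1 + 4 ω₋₁,₁(0) t / d lies off the closed negative real axis (so its principal square root is defined and nonvanishing) and v_{c,1}(t) ≠ v_{c,2}(t). Then the functions ω₋₁,₁(t) = ω₋₁,₁(0) / √(1 + 4 ω₋₁,₁(0) t / d), ω₋₁,₂(t) = −ω₋₁,₁(t), v_{c,1}(t) = ν t + (d/2) √(1 + 4 ω₋₁,₁(0) t / d) + (v_{c,1}(0) + v_{c,2}(0))/2, and v_{c,2}(t) = −v_{c,1}(t) + 2 ν t + v_{c,1}(0) + v_{c,2}(0) satisfy, on [0, T), the system d v_{c,1}/dt = ν + ω₋₁,₁, d v_{c,2}/dt = ν + ω₋₁,₂, d ω₋₁,₁/dt = 2 ω₋₁,₁ ω₋₁,₂ / (v_{c,1} − v_{c,2}), and d ω₋₁,₂/dt = 2 ω₋₁,₁ ω₋₁,₂ / (v_{c,2} − v_{c,1}), with the prescribed initial values (and ω₋₁,₂(0)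 = −ω₋₁,₁(0)). -/

import Mathlib

noncomputable section

/-- The quantity `1 + 4 ω₋₁,₁(0) t / d` appearing under the square root,
where `d = v_{c,1}(0) − v_{c,2}(0)`. -/
def radicand (w0 d : ℂ) (t : ℝ) : ℂ := 1 + 4 * w0 * (t : ℂ) / d

/-- Its principal square root. -/
def sqrtRad (w0 d : ℂ) (t : ℝ) : ℂ := radicand w0 d t ^ ((1 : ℂ) / 2)

/-- `ω₋₁,₁(t) = ω₋₁,₁(0)/√(1 + 4 ω₋₁,₁(0) t / d)`. -/
def omOne (w0 d : ℂ) (t : ℝ) : ℂ := w0 / sqrtRad w0 d t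

/-- `v_{c,1}(t) = ν t + (d/2)√(1 + 4 ω₋₁,₁(0) t / d) + (v_{c,1}(0) + v_{c,2}(0))/2`. -/
def vcOne (ν : ℝ) (w0 v10 v20 : ℂ) (t : ℝ) : ℂ :=
  (ν : ℂ) * (t : ℂ) + (v10 - v20) / 2 * sqrtRad w0 (v10 - v20) t + (v10 + v20) / 2

/-- `v_{c,2}(t) = −v_{c,1}(t) + 2 ν t + v_{c,1}(0) + v_{c,2}(0)`. -/
def vcTwo (ν : ℝ) (w0 v10 v20 : ℂ) (t : ℝ) : ℂ :=
  -vcOne ν w0 v10 v20 t + 2 * (ν : ℂ) * (t : ℂ) + v10 + v20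

lemma hasDerivAt_radicand (w0 d : ℂ) (t : ℝ) :
    HasDerivAt (fun s : ℝ => radicand w0 d s) (4 * w0 / d) t := by
  have h0 : HasDerivAt (fun s : ℝ => (s : ℂ)) 1 t := by
    have := Complex.ofRealCLM.hasDerivAt (x := t); simp at this; exact this
  have h1 : HasDerivAt (fun s : ℝ => 4 * w0 * (s : ℂ) / d) (4 * w0 * 1 / d) t :=
    ((h0.const_mul (4 * w0)).div_const d)
  simpa [radicand, mul_one] using (h1.const_add 1)

lemma hasDerivAt_sqrtRad (w0 d : ℂ) (t : ℝ)
    (h : radicand w0 d t ∈ Complex.slitPlane) :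
    HasDerivAt (fun s : ℝ => sqrtRad w0 d s)
      ((1 : ℂ) / 2 * radicand w0 d t ^ ((1 : ℂ) / 2 - 1) * (4 * w0 / d)) t := by
  have h1 := ((Complex.hasStrictDerivAt_cpow_const (c := (1 : ℂ) / 2)
    h).hasDerivAt.comp t (hasDerivAt_radicand w0 d t))
  simp [sqrtRad, Function.comp, mul_assoc] at h1 ⊢; exact h1

/-- The explicit formulas (with the principal branch of the complex square root) solve the
two-pair pole-dynamics system for the dissipative gCLM equation on the real line with
`a = 0`, `σ = 1`, in the case `ω₋₁,₁(0) + ω₋₁,₂(0) = 0`: on any interval `[0, T)` on which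
`1 + 4 ω₋₁,₁(0) t / d` stays off the closed negative real axis and `v_{c,1}(t) ≠ v_{c,2}(t)`,
the functions `ω₋₁,₁, ω₋₁,₂ = −ω₋₁,₁, v_{c,1}, v_{c,2}` satisfy
`dv_{c,1}/dt = ν + ω₋₁,₁`, `dv_{c,2}/dt = ν + ω₋₁,₂`,
`dω₋₁,₁/dt = 2 ω₋₁,₁ ω₋₁,₂/(v_{c,1} − v_{c,2})`,
`dω₋₁,₂/dt = 2 ω₋₁,₁ ω₋₁,₂/(v_{c,2} − v_{c,1})`, with the prescribed initial values. -/
theorem stmt16 (ν : ℝ) (w0 v10 v20 : ℂ) (hne : v10 ≠ v20) (T : ℝ) (hT : 0 < T)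
    (hbranch : ∀ t ∈ Set.Ico (0 : ℝ) T,
      ¬((radicand w0 (v10 - v20) t).im = 0 ∧ (radicand w0 (v10 - v20) t).re ≤ 0))
    (hsep : ∀ t ∈ Set.Ico (0 : ℝ) T,
      vcOne ν w0 v10 v20 t ≠ vcTwo ν w0 v10 v20 t) :
    omOne w0 (v10 - v20) 0 = w0 ∧
    (-(omOne w0 (v10 - v20) 0)) = -w0 ∧
    vcOne ν w0 v10 v20 0 = v10 ∧
    vcTwo ν w0 v10 v20 0 = v20 ∧
    ∀ t ∈ Set.Ico (0 : ℝ) T,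
      HasDerivWithinAt (vcOne ν w0 v10 v20)
        ((ν : ℂ) + omOne w0 (v10 - v20) t) (Set.Ico (0 : ℝ) T) t ∧
      HasDerivWithinAt (vcTwo ν w0 v10 v20)
        ((ν : ℂ) + -(omOne w0 (v10 - v20) t)) (Set.Ico (0 : ℝ) T) t ∧
      HasDerivWithinAt (omOne w0 (v10 - v20))
        (2 * omOne w0 (v10 - v20) t * (-(omOne w0 (v10 - v20) t)) /
          (vcOne ν w0 v10 v20 t - vcTwo ν w0 v10 v20 t)) (Set.Ico (0 : ℝ) T) t ∧
      HasDerivWithinAt (fun s : ℝ => -(omOne w0 (v10 - v20) s))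
        (2 * omOne w0 (v10 - v20) t * (-(omOne w0 (v10 - v20) t)) /
          (vcTwo ν w0 v10 v20 t - vcOne ν w0 v10 v20 t)) (Set.Ico (0 : ℝ) T) t := by
  set d : ℂ := v10 - v20 with hd_def
  have hd : d ≠ 0 := sub_ne_zero.mpr hne
  have hrad0 : radicand w0 d 0 = 1 := by simp [radicand]
  have hsq0 : sqrtRad w0 d 0 = 1 := by simp [sqrtRad, hrad0]
  refine ⟨by simp [omOne, hsq0], by simp [omOne, hsq0], ?_, ?_, ?_⟩
  · simp only [vcOne, ← hd_def, hsq0]; push_cast; ring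
  · simp only [vcTwo, vcOne, ← hd_def, hsq0]; push_cast; ring
  · intro t ht
    have hslit : radicand w0 d t ∈ Complex.slitPlane := by
      rw [Complex.mem_slitPlane_iff]
      rcases not_and_or.mp (hbranch t ht) with h | h
      · exact Or.inr h
      · exact Or.inl (lt_of_not_ge h)
    have hR0 : radicand w0 d t ≠ 0 := Complex.slitPlane_ne_zero hslit
    set R : ℂ := radicand w0 d t with hR_def
    set S : ℂ := sqrtRad w0 d t with hS_def
    have hS0 : S ≠ 0 := by
      rw [hS_def, sqrtRad]
      intro h
      exact hR0 ((Complex.cpow_eq_zero_iff _ _).mp h).1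
    -- S^2 = R
    have hS2 : S * S = R := by
      rw [hS_def, sqrtRad, ← Complex.cpow_add _ _ hR0]
      norm_num
    -- R ^ (1/2 - 1) = S⁻¹
    have hpow : R ^ ((1 : ℂ) / 2 - 1) = S⁻¹ := by
      have : ((1 : ℂ) / 2 - 1) = -(1 / 2) := by norm_num
      rw [this, Complex.cpow_neg, hS_def, sqrtRad]
    have hS' : HasDerivAt (fun s : ℝ => sqrtRad w0 d s)
        ((1 : ℂ) / 2 * S⁻¹ * (4 * w0 / d)) t := by
      have := hasDerivAt_sqrtRad w0 d t hslit
      rwa [← hR_def, hpow] at this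
    -- derivative of vcOne
    have hv1 : HasDerivAt (vcOne ν w0 v10 v20) ((ν : ℂ) + omOne w0 d t) t := by
      have h0 : HasDerivAt (fun s : ℝ => (s : ℂ)) 1 t := by
        have := Complex.ofRealCLM.hasDerivAt (x := t); simp at this; exact this
      have h1 : HasDerivAt (fun s : ℝ => (ν : ℂ) * (s : ℂ)) ((ν : ℂ) * 1) t := h0.const_mul _
      have h2 : HasDerivAt (fun s : ℝ => d / 2 * sqrtRad w0 d s)
          (d / 2 * ((1 : ℂ) / 2 * S⁻¹ * (4 * w0 / d))) t := hS'.const_mul _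
      have h3 := (h1.add h2).add_const ((v10 + v20) / 2)
      have heq : (ν : ℂ) * 1 + d / 2 * ((1 : ℂ) / 2 * S⁻¹ * (4 * w0 / d))
          = (ν : ℂ) + omOne w0 d t := by
        rw [omOne, ← hS_def]
        field_simp
        ring
      rw [heq] at h3
      exact h3.congr_deriv rfl
    -- v1 - v2 = d * S
    have hdiff : vcOne ν w0 v10 v20 t - vcTwo ν w0 v10 v20 t = d * S := by
      simp only [vcTwo, vcOne, ← hd_def, ← hS_def]
      ring
    -- derivative of vcTwo
    have hv2 : HasDerivAt (vcTwo ν w0 v10 v20) ((ν : ℂ) + -(omOne w0 d t)) t := by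
      have h0 : HasDerivAt (fun s : ℝ => (s : ℂ)) 1 t := by
        have := Complex.ofRealCLM.hasDerivAt (x := t); simp at this; exact this
      have h1 : HasDerivAt (fun s : ℝ => 2 * (ν : ℂ) * (s : ℂ)) (2 * (ν : ℂ) * 1) t :=
        h0.const_mul _
      have h3 := ((hv1.neg.add h1).add_const v10).add_const v20
      have heq : -((ν : ℂ) + omOne w0 d t) + 2 * (ν : ℂ) * 1 = (ν : ℂ) + -(omOne w0 d t) := by
        ring
      rw [heq] at h3
      exact h3.congr_deriv rfl
    -- derivative of omOne
    have hom : HasDerivAt (omOne w0 d)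
        (2 * omOne w0 d t * (-(omOne w0 d t)) /
          (vcOne ν w0 v10 v20 t - vcTwo ν w0 v10 v20 t)) t := by
      have hconst : HasDerivAt (fun _ : ℝ => w0) 0 t := hasDerivAt_const t w0
      have hdiv := hconst.div hS' (by rw [← hS_def]; exact hS0)
      have heq : (0 * S - w0 * ((1 : ℂ) / 2 * S⁻¹ * (4 * w0 / d))) / S ^ 2
          = 2 * omOne w0 d t * (-(omOne w0 d t)) /
            (vcOne ν w0 v10 v20 t - vcTwo ν w0 v10 v20 t) := by
        rw [hdiff, omOne, ← hS_def]
        field_simp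
        ring
      rw [← hS_def] at hdiv
      rw [heq] at hdiv
      exact hdiv.congr_deriv rfl
    have homn : HasDerivAt (fun s : ℝ => -(omOne w0 d s))
        (2 * omOne w0 d t * (-(omOne w0 d t)) /
          (vcTwo ν w0 v10 v20 t - vcOne ν w0 v10 v20 t)) t := by
      have := hom.neg
      have heq : -(2 * omOne w0 d t * (-(omOne w0 d t)) /
            (vcOne ν w0 v10 v20 t - vcTwo ν w0 v10 v20 t))
          = 2 * omOne w0 d t * (-(omOne w0 d t)) /
            (vcTwo ν w0 v10 v20 t - vcOne ν w0 v10 v20 t) := by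
        have hC : vcTwo ν w0 v10 v20 t - vcOne ν w0 v10 v20 t
            = -(vcOne ν w0 v10 v20 t - vcTwo ν w0 v10 v20 t) := by ring
        rw [hC, div_neg]
      rwa [heq] at this
    exact ⟨hv1.hasDerivWithinAt, hv2.hasDerivWithinAt, hom.hasDerivWithinAt,
      homn.hasDerivWithinAt⟩

end
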